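/- (Averaged Taylor polynomial in time, Lemma 3.3) For every k ∈ ℕ there exists a constant C > 0, depending only on k, such that for every real Banach space E, every compact interval [a,b] ⊂ ℝ with h := b−a > 0, and every k-times continuously differentiable function f : [a,b] → E, there exist coefficients c_0, …, c_k ∈ E such that, setting p(t) := Σ_{i=0}^k c_i t^i, the bound ( ∫_a^b ‖f^{(m)}(t) − p^{(m)}(t)‖_E² dt )^{1/2} ≤ C · h^{k−m} · ( ∫_a^b ‖f^{(k)}(t)‖_E² dt )^{1/2} holds for every m = 0, 1, …, k. -/

import Mathlib

open MeasureTheory Set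

private lemma poly_hasDerivAt {E : Type*} [NormedAddCommGroup E] [NormedSpace ℝ E]
    (k : ℕ) (c : Fin (k+1) → E) (m : ℕ) (t : ℝ) :
    HasDerivAt
      (fun u : ℝ => ∑ i : Fin (k+1), ((Nat.descFactorial (i:ℕ) m : ℝ) * u ^ ((i:ℕ) - m)) • c i)
      (∑ i : Fin (k+1), ((Nat.descFactorial (i:ℕ) (m+1) : ℝ) * t ^ ((i:ℕ) - (m+1))) • c i) t := by
  apply HasDerivAt.fun_sum
  intro i _
  have h1 : HasDerivAt
      (fun u : ℝ => ((Nat.descFactorial (i:ℕ) m : ℝ) * u ^ ((i:ℕ) - m)) • c i)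
      (((Nat.descFactorial (i:ℕ) m : ℝ) * ((((i:ℕ) - m : ℕ) : ℝ) * t ^ ((i:ℕ) - m - 1))) • c i)
      t := ((hasDerivAt_pow ((i:ℕ) - m) t).const_mul _).smul_const (c i)
  convert h1 using 2
  rcases Nat.lt_or_ge (i:ℕ) (m+1) with h | h
  · have h0 : ((i:ℕ)).descFactorial (m+1) = 0 := Nat.descFactorial_eq_zero_iff_lt.mpr h
    rcases Nat.lt_or_ge (i:ℕ) m with h2 | h2
    · simp [h0, Nat.descFactorial_eq_zero_iff_lt.mpr h2]
    · have he : (i:ℕ) - m = 0 := by omega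
      simp [h0, he]
  · have h2 : (i:ℕ) - m - 1 = (i:ℕ) - (m+1) := by omega
    rw [Nat.descFactorial_succ, h2]
    push_cast [Nat.cast_sub (show m ≤ (i:ℕ) by omega)]
    ring
private lemma scalar_sum (a : ℝ) (m j : ℕ) :
    ∑ i ∈ Finset.range (j+1),
        (Nat.descFactorial i m : ℝ) * a ^ (i - m) *
          ((-a) ^ (j - i) / ((j - i).factorial * i.factorial))
      = if j = m then 1 else 0 := by
  rcases Nat.lt_or_ge j m with hj | hj
  · rw [if_neg (by omega)]
    apply Finset.sum_eq_zero
    intro i hi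
    have : i < m := by
      have := Finset.mem_range.mp hi; omega
    simp [Nat.descFactorial_eq_zero_iff_lt.mpr this]
  · obtain ⟨e, rfl⟩ : ∃ e, j = m + e := ⟨j - m, by omega⟩
    have hsplit : ∑ i ∈ Finset.range (m+e+1),
        (Nat.descFactorial i m : ℝ) * a ^ (i - m) *
          ((-a) ^ (m + e - i) / ((m + e - i).factorial * i.factorial))
        = ∑ i ∈ Finset.Ico m (m+e+1),
        (Nat.descFactorial i m : ℝ) * a ^ (i - m) *
          ((-a) ^ (m + e - i) / ((m + e - i).factorial * i.factorial)) := by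
      rw [Finset.range_eq_Ico,
        ← Finset.sum_Ico_consecutive _ (Nat.zero_le m) (by omega : m ≤ m+e+1)]
      have hz : ∑ i ∈ Finset.Ico 0 m,
          (Nat.descFactorial i m : ℝ) * a ^ (i - m) *
            ((-a) ^ (m + e - i) / ((m + e - i).factorial * i.factorial)) = 0 := by
        apply Finset.sum_eq_zero
        intro i hi
        have : i < m := (Finset.mem_Ico.mp hi).2
        simp [Nat.descFactorial_eq_zero_iff_lt.mpr this]
      rw [hz, zero_add]
    rw [hsplit, Finset.sum_Ico_eq_sum_range]
    have hrange : m + e + 1 - m = e + 1 := by omega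
    rw [hrange]
    have hterm : ∀ d ∈ Finset.range (e+1),
        (Nat.descFactorial (m+d) m : ℝ) * a ^ ((m+d) - m) *
          ((-a) ^ (m + e - (m+d)) / ((m + e - (m+d)).factorial * (m+d).factorial))
        = (a ^ d * (-a) ^ (e - d) * (Nat.choose e d : ℝ)) / (Nat.factorial e) := by
      intro d hd
      have hde : d ≤ e := by have := Finset.mem_range.mp hd; omega
      have h1 : ((m+d) - m) = d := by omega
      have h2 : (m + e - (m+d)) = e - d := by omega
      rw [h1, h2]
      have hn1 : (Nat.descFactorial (m+d) m) * d.factorial = (m+d).factorial := by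
        rw [Nat.descFactorial_eq_factorial_mul_choose]
        have := Nat.choose_mul_factorial_mul_factorial (show m ≤ m + d by omega)
        have h3 : m + d - m = d := by omega
        rw [h3] at this
        calc m.factorial * (m+d).choose m * d.factorial
            = (m+d).choose m * m.factorial * d.factorial := by ring
          _ = (m+d).factorial := this
      have hn2 : (Nat.choose e d) * d.factorial * (e-d).factorial = e.factorial :=
        Nat.choose_mul_factorial_mul_factorial hde
      have c1 : ((Nat.descFactorial (m+d) m : ℝ)) * d.factorial = (m+d).factorial := by
        exact_mod_cast congrArg (Nat.cast (R := ℝ)) hn1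
      have c2 : ((Nat.choose e d : ℝ)) * d.factorial * (e-d).factorial = e.factorial := by
        exact_mod_cast congrArg (Nat.cast (R := ℝ)) hn2
      have hfd : (d.factorial : ℝ) ≠ 0 := Nat.cast_ne_zero.mpr d.factorial_ne_zero
      have hfed : ((e-d).factorial : ℝ) ≠ 0 := Nat.cast_ne_zero.mpr (e-d).factorial_ne_zero
      have hfmd : ((m+d).factorial : ℝ) ≠ 0 := Nat.cast_ne_zero.mpr (m+d).factorial_ne_zero
      have hfe : (e.factorial : ℝ) ≠ 0 := Nat.cast_ne_zero.mpr e.factorial_ne_zero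
      have hdesc : (Nat.descFactorial (m+d) m : ℝ) = (m+d).factorial / d.factorial := by
        rw [eq_div_iff hfd]; exact c1
      have hch : (Nat.choose e d : ℝ) = e.factorial / (d.factorial * (e-d).factorial) := by
        rw [eq_div_iff (mul_ne_zero hfd hfed), ← mul_assoc]; exact c2
      rw [hdesc, hch]
      field_simp
    rw [Finset.sum_congr rfl hterm]
    rw [← Finset.sum_div]
    have hb : ∑ d ∈ Finset.range (e+1), a ^ d * (-a) ^ (e - d) * (Nat.choose e d : ℝ)
        = (a + -a) ^ e := (add_pow a (-a) e).symm
    rw [hb]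
    rcases Nat.eq_zero_or_pos e with he | he
    · subst he; simp
    · rw [if_neg (by omega)]
      rw [add_neg_cancel, zero_pow (by omega), zero_div]

private lemma poly_interp {E : Type*} [NormedAddCommGroup E] [NormedSpace ℝ E]
    (k : ℕ) (a : ℝ) (F : ℕ → E) (m : ℕ) (hm : m < k) :
    ∑ i : Fin (k+1), ((Nat.descFactorial (i:ℕ) m : ℝ) * a ^ ((i:ℕ) - m)) •
        (∑ j ∈ Finset.Ico (i:ℕ) k,
          (((-a) ^ (j - (i:ℕ)) / ((j - (i:ℕ)).factorial * (i:ℕ).factorial)) • F j))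
      = F m := by
  rw [Fin.sum_univ_eq_sum_range (fun i => ((Nat.descFactorial i m : ℝ) * a ^ (i - m)) •
        (∑ j ∈ Finset.Ico i k,
          (((-a) ^ (j - i) / ((j - i).factorial * i.factorial)) • F j)))]
  have step1 : ∀ i ∈ Finset.range (k+1),
      ((Nat.descFactorial i m : ℝ) * a ^ (i - m)) •
        (∑ j ∈ Finset.Ico i k, (((-a) ^ (j - i) / ((j - i).factorial * i.factorial)) • F j))
      = ∑ j ∈ Finset.Ico i k,
          ((Nat.descFactorial i m : ℝ) * a ^ (i - m) *
            ((-a) ^ (j - i) / ((j - i).factorial * i.factorial))) • F j := by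
    intro i _
    rw [Finset.smul_sum]
    exact Finset.sum_congr rfl fun j _ => (smul_smul _ _ _)
  rw [Finset.sum_congr rfl step1]
  rw [Finset.sum_comm' (s' := fun j => Finset.range (j+1)) (t' := Finset.range k)
    (by intro x y; simp only [Finset.mem_range, Finset.mem_Ico]; omega)]
  have step2 : ∀ j ∈ Finset.range k,
      (∑ i ∈ Finset.range (j+1),
        ((Nat.descFactorial i m : ℝ) * a ^ (i - m) *
          ((-a) ^ (j - i) / ((j - i).factorial * i.factorial))) • F j)
      = (if j = m then (1:ℝ) else 0) • F j := by
    intro j _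
    rw [← Finset.sum_smul, scalar_sum]
  rw [Finset.sum_congr rfl step2]
  simp [ite_smul, Finset.sum_ite_eq', Finset.mem_range.mpr hm]
private lemma cs_interval {a b : ℝ} (hab : a ≤ b) (g : ℝ → ℝ)
    (hg : ContinuousOn g (Set.Icc a b)) (hg0 : ∀ x, 0 ≤ g x) :
    ∫ u in a..b, g u ≤ Real.sqrt (b - a) * Real.sqrt (∫ u in a..b, (g u) ^ 2) := by
  set μ := volume.restrict (Set.Ioc a b) with hμ
  haveI : IsFiniteMeasure μ := by
    constructor
    rw [hμ, Measure.restrict_apply_univ, Real.volume_Ioc]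
    exact ENNReal.ofReal_lt_top
  have hmeas : AEStronglyMeasurable g μ :=
    (hg.mono Set.Ioc_subset_Icc_self).aestronglyMeasurable measurableSet_Ioc
  obtain ⟨C, hC⟩ := isCompact_Icc.exists_bound_of_continuousOn hg
  have hgb : MemLp g (ENNReal.ofReal 2) μ :=
    MemLp.of_bound hmeas C ((ae_restrict_iff' measurableSet_Ioc).mpr
      (ae_of_all _ fun x hx => hC x (Set.Ioc_subset_Icc_self hx)))
  have h1 : MemLp (fun _ : ℝ => (1:ℝ)) (ENNReal.ofReal 2) μ := memLp_const 1
  have hpq : (2:ℝ).HolderConjugate 2 := Real.HolderConjugate.two_two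
  have key := MeasureTheory.integral_mul_le_Lp_mul_Lq_of_nonneg hpq
    (f := g) (g := fun _ => (1:ℝ)) (μ := μ)
    (ae_of_all _ hg0) (ae_of_all _ fun _ => zero_le_one) hgb h1
  have e1 : ∫ x, g x * 1 ∂μ = ∫ u in a..b, g u := by
    rw [intervalIntegral.integral_of_le hab]; simp [hμ]
  have e2 : ∫ x, g x ^ (2:ℝ) ∂μ = ∫ u in a..b, (g u) ^ 2 := by
    rw [intervalIntegral.integral_of_le hab]
    refine integral_congr_ae (ae_of_all _ fun x => ?_)
    show g x ^ (2:ℝ) = g x ^ (2:ℕ)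
    rw [show ((2:ℝ)) = ((2:ℕ):ℝ) by norm_num, Real.rpow_natCast]
  have e3 : ∫ x, (1:ℝ) ^ (2:ℝ) ∂μ = b - a := by
    simp [hμ, hab, Real.volume_Ioc, ENNReal.toReal_ofReal (by linarith : (0:ℝ) ≤ b - a)]
  rw [e1, e2, e3] at key
  calc ∫ u in a..b, g u ≤ (∫ u in a..b, (g u) ^ 2) ^ (1/(2:ℝ)) * (b - a) ^ (1/(2:ℝ)) := key
    _ = Real.sqrt (b - a) * Real.sqrt (∫ u in a..b, (g u) ^ 2) := by
        rw [← Real.sqrt_eq_rpow, ← Real.sqrt_eq_rpow, mul_comm]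
private noncomputable def rfun {E : Type*} [NormedAddCommGroup E] [NormedSpace ℝ E]
    (k : ℕ) (c : Fin (k+1) → E) (F : ℕ → ℝ → E) (n : ℕ) (t : ℝ) : E :=
  F n t - ∑ i : Fin (k+1), ((Nat.descFactorial (i:ℕ) n : ℝ) * t ^ ((i:ℕ) - n)) • c i

private lemma core {E : Type*} [NormedAddCommGroup E] [NormedSpace ℝ E] [CompleteSpace E]
    (k : ℕ) (a b : ℝ) (hab : a < b) (F : ℕ → ℝ → E) (c : Fin (k+1) → E)
    (hc : ∀ i : Fin (k+1), c i = ∑ j ∈ Finset.Ico (i:ℕ) k,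
        (((-a) ^ (j - (i:ℕ)) / ((j - (i:ℕ)).factorial * (i:ℕ).factorial)) • F j a))
    (hFc : ∀ m, m ≤ k → ContinuousOn (F m) (Set.Icc a b))
    (hFd : ∀ m, m < k → ∀ x ∈ Set.Icc a b, HasDerivWithinAt (F m) (F (m+1) x) (Set.Icc a b) x)
    (m : ℕ) (hmk : m ≤ k) :
    (∫ t in a..b, ‖rfun k c F m t‖ ^ 2) ^ (1/2:ℝ)
      ≤ (b - a) ^ (k - m) * (∫ t in a..b, ‖F k t‖ ^ 2) ^ (1/2:ℝ) := by
  have hab' : a ≤ b := hab.le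
  have hra : ∀ n, n < k → rfun k c F n a = 0 := by
    intro n hn
    unfold rfun
    simp only [hc]
    rw [sub_eq_zero]
    exact (poly_interp k a (fun j => F j a) n hn).symm
  have hrk : ∀ t, rfun k c F k t = F k t := by
    intro t
    unfold rfun
    have hz : ∑ i : Fin (k+1), ((Nat.descFactorial (i:ℕ) k : ℝ) * t ^ ((i:ℕ) - k)) • c i
        = 0 := by
      apply Finset.sum_eq_zero
      intro i _
      rcases lt_or_eq_of_le (Nat.lt_succ_iff.mp i.isLt) with h | h
      · simp [Nat.descFactorial_eq_zero_iff_lt.mpr h]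
      · rw [hc, h]; simp
    rw [hz, sub_zero]
  have hrd : ∀ n, n < k → ∀ x ∈ Set.Ioo a b,
      HasDerivAt (rfun k c F n) (rfun k c F (n+1) x) x := by
    intro n hn x hx
    have hmem : Set.Icc a b ∈ nhds x := Icc_mem_nhds hx.1 hx.2
    have hF' : HasDerivAt (F n) (F (n+1) x) x :=
      (hFd n hn x (Set.Ioo_subset_Icc_self hx)).hasDerivAt hmem
    exact hF'.sub (poly_hasDerivAt k c n x)
  have hrc : ∀ n, n ≤ k → ContinuousOn (rfun k c F n) (Set.Icc a b) := by
    intro n hn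
    apply (hFc n hn).sub
    apply Continuous.continuousOn
    apply continuous_finset_sum
    intro i _
    exact (continuous_const.mul (continuous_pow _)).smul continuous_const
  have hFTC : ∀ n, n < k → ∀ t ∈ Set.Icc a b,
      rfun k c F n t = ∫ u in a..t, rfun k c F (n+1) u := by
    intro n hn t ht
    have h1 : ∫ u in a..t, rfun k c F (n+1) u = rfun k c F n t - rfun k c F n a := by
      apply intervalIntegral.integral_eq_sub_of_hasDeriv_right_of_le ht.1
      · exact (hrc n hn.le).mono (Set.Icc_subset_Icc_right ht.2)
      · intro x hx
        exact (hrd n hn x ⟨hx.1, lt_of_lt_of_le hx.2 ht.2⟩).hasDerivWithinAt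
      · apply ContinuousOn.intervalIntegrable
        rw [Set.uIcc_of_le ht.1]
        exact (hrc (n+1) hn).mono (Set.Icc_subset_Icc_right ht.2)
    rw [h1, hra n hn, sub_zero]
  set I : ℝ := ∫ u in a..b, ‖F k u‖ with hI
  have hI0 : 0 ≤ I := intervalIntegral.integral_nonneg hab' fun u _ => norm_nonneg _
  have hIint : IntervalIntegrable (fun u => ‖F k u‖) volume a b := by
    apply ContinuousOn.intervalIntegrable
    rw [Set.uIcc_of_le hab']
    exact (hFc k le_rfl).norm
  have key : ∀ d n, n + d + 1 = k → ∀ t ∈ Set.Icc a b,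
      ‖rfun k c F n t‖ ≤ (b-a)^d * I := by
    intro d
    induction d with
    | zero =>
      intro n hnk t ht
      have hn : n < k := by omega
      rw [hFTC n hn t ht, pow_zero, one_mul]
      have hrw : ∀ u, rfun k c F (n+1) u = F k u := by
        intro u; rw [show n+1 = k by omega]; exact hrk u
      calc ‖∫ u in a..t, rfun k c F (n+1) u‖
          ≤ ∫ u in a..t, ‖rfun k c F (n+1) u‖ :=
            intervalIntegral.norm_integral_le_integral_norm ht.1
        _ = ∫ u in a..t, ‖F k u‖ := by simp only [hrw]
        _ ≤ I := intervalIntegral.integral_mono_interval le_rfl ht.1 ht.2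
              (ae_of_all _ fun u => norm_nonneg _) hIint
    | succ d ih =>
      intro n hnk t ht
      have hn : n < k := by omega
      rw [hFTC n hn t ht]
      have hint1 : IntervalIntegrable (fun u => ‖rfun k c F (n+1) u‖) volume a t := by
        apply ContinuousOn.intervalIntegrable
        rw [Set.uIcc_of_le ht.1]
        exact ((hrc (n+1) (by omega)).norm).mono (Set.Icc_subset_Icc_right ht.2)
      calc ‖∫ u in a..t, rfun k c F (n+1) u‖
          ≤ ∫ u in a..t, ‖rfun k c F (n+1) u‖ :=
            intervalIntegral.norm_integral_le_integral_norm ht.1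
        _ ≤ ∫ u in a..t, (b-a)^d * I := by
            apply intervalIntegral.integral_mono_on ht.1 hint1 intervalIntegrable_const
            intro u hu
            exact ih (n+1) (by omega) u ⟨hu.1, le_trans hu.2 ht.2⟩
        _ = (t - a) * ((b-a)^d * I) := by
            rw [intervalIntegral.integral_const, smul_eq_mul]
        _ ≤ (b - a) * ((b-a)^d * I) := by
            apply mul_le_mul_of_nonneg_right (by linarith [ht.2]) (mul_nonneg (pow_nonneg (by linarith : (0:ℝ) ≤ b - a) d) hI0)
        _ = (b-a)^(d+1) * I := by ring
  rcases Nat.lt_or_ge m k with hm | hm'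
  · obtain ⟨d, hd⟩ : ∃ d, m + d + 1 = k := ⟨k - m - 1, by omega⟩
    set L2 : ℝ := ∫ t in a..b, ‖F k t‖ ^ 2 with hL2
    have hbound := key d m hd
    have hint2 : IntervalIntegrable (fun t => ‖rfun k c F m t‖^2) volume a b := by
      apply ContinuousOn.intervalIntegrable
      rw [Set.uIcc_of_le hab']
      exact ((hrc m hm.le).norm).pow 2
    have hA : ∫ t in a..b, ‖rfun k c F m t‖^2 ≤ (b-a) * ((b-a)^d * I)^2 := by
      calc ∫ t in a..b, ‖rfun k c F m t‖^2
          ≤ ∫ t in a..b, ((b-a)^d * I)^2 := by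
            apply intervalIntegral.integral_mono_on hab' hint2 intervalIntegrable_const
            intro t ht
            exact pow_le_pow_left₀ (norm_nonneg _) (hbound t ht) 2
        _ = (b-a) * ((b-a)^d * I)^2 := by
            simp [intervalIntegral.integral_const, smul_eq_mul]
    have hIb : I ≤ Real.sqrt (b-a) * Real.sqrt L2 :=
      cs_interval hab' (fun u => ‖F k u‖) ((hFc k le_rfl).norm) (fun u => norm_nonneg _)
    rw [← Real.sqrt_eq_rpow, ← Real.sqrt_eq_rpow]
    have hs1 : Real.sqrt (b-a) * Real.sqrt (b-a) = b - a := Real.mul_self_sqrt (by linarith)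
    calc Real.sqrt (∫ t in a..b, ‖rfun k c F m t‖^2)
        ≤ Real.sqrt ((b-a) * ((b-a)^d * I)^2) := Real.sqrt_le_sqrt hA
      _ = Real.sqrt (b-a) * ((b-a)^d * I) := by
          rw [Real.sqrt_mul (by linarith), Real.sqrt_sq (mul_nonneg (pow_nonneg (by linarith : (0:ℝ) ≤ b - a) d) hI0)]
      _ ≤ Real.sqrt (b-a) * ((b-a)^d * (Real.sqrt (b-a) * Real.sqrt L2)) := by
          apply mul_le_mul_of_nonneg_left _ (Real.sqrt_nonneg _)
          exact mul_le_mul_of_nonneg_left hIb (pow_nonneg (by linarith : (0:ℝ) ≤ b - a) d)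
      _ = (Real.sqrt (b-a) * Real.sqrt (b-a)) * ((b-a)^d * Real.sqrt L2) := by ring
      _ = (b-a)^(d+1) * Real.sqrt L2 := by rw [hs1]; ring
      _ = (b-a)^(k-m) * Real.sqrt L2 := by rw [show k - m = d + 1 by omega]
  · have hm : m = k := by omega
    subst hm
    simp only [hrk]
    rw [Nat.sub_self, pow_zero, one_mul]


/-- Averaged Taylor polynomial in time (Lemma 3.3): for every `k` there is `C = C(k)` such
that any `C^k` function `f : [a,b] → E` into a Banach space admits a polynomial
`p(t) = Σ_{i=0}^k c_i t^i` with
`‖f^{(m)} − p^{(m)}‖_{L²(a,b)} ≤ C h^{k−m} ‖f^{(k)}‖_{L²(a,b)}` for all `0 ≤ m ≤ k`,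
where `h = b − a` and `p^{(m)}(t) = Σ_{i≥m} (i!/(i−m)!) c_i t^{i−m}`. -/
theorem averaged_taylor_in_time.{u} (k : ℕ) :
    ∃ C : ℝ, 0 < C ∧
      ∀ (E : Type u) (_ : NormedAddCommGroup E), ∀ (_ : NormedSpace ℝ E) (_ : CompleteSpace E),
      ∀ (a b : ℝ), a < b →
      ∀ f : ℝ → E, ContDiffOn ℝ k f (Set.Icc a b) →
        ∃ c : Fin (k + 1) → E,
          ∀ m ≤ k,
            (∫ t in a..b,
                ‖iteratedDerivWithin m f (Set.Icc a b) t -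
                  ∑ i : Fin (k + 1),
                    ((Nat.descFactorial (i : ℕ) m : ℝ) * t ^ ((i : ℕ) - m)) • c i‖ ^ 2)
              ^ (1/2 : ℝ) ≤
            C * (b - a) ^ (k - m) *
              (∫ t in a..b, ‖iteratedDerivWithin k f (Set.Icc a b) t‖ ^ 2) ^ (1/2 : ℝ) := by
  refine ⟨1, one_pos, ?_⟩
  intro E _ _ _ a b hab f hf
  have hs : UniqueDiffOn ℝ (Set.Icc a b) := uniqueDiffOn_Icc hab
  refine ⟨fun i => ∑ j ∈ Finset.Ico (i:ℕ) k,
      (((-a) ^ (j - (i:ℕ)) / ((j - (i:ℕ)).factorial * (i:ℕ).factorial)) •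
        iteratedDerivWithin j f (Set.Icc a b) a), ?_⟩
  intro m hmk
  have hFc : ∀ n, n ≤ k →
      ContinuousOn (iteratedDerivWithin n f (Set.Icc a b)) (Set.Icc a b) := fun n hn =>
    hf.continuousOn_iteratedDerivWithin (by exact_mod_cast hn) hs
  have hFd : ∀ n, n < k → ∀ x ∈ Set.Icc a b,
      HasDerivWithinAt (iteratedDerivWithin n f (Set.Icc a b))
        (iteratedDerivWithin (n+1) f (Set.Icc a b) x) (Set.Icc a b) x := by
    intro n hn x hx
    have hdiff : DifferentiableOn ℝ (iteratedDerivWithin n f (Set.Icc a b)) (Set.Icc a b) :=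
      hf.differentiableOn_iteratedDerivWithin (by exact_mod_cast hn) hs
    have h2 := (hdiff x hx).hasDerivWithinAt
    rwa [← iteratedDerivWithin_succ] at h2
  have hcore := core k a b hab (fun n => iteratedDerivWithin n f (Set.Icc a b))
    (fun i => ∑ j ∈ Finset.Ico (i:ℕ) k,
      (((-a) ^ (j - (i:ℕ)) / ((j - (i:ℕ)).factorial * (i:ℕ).factorial)) •
        iteratedDerivWithin j f (Set.Icc a b) a))
    (fun i => rfl) hFc hFd m hmk
  rw [one_mul]
  simpa [rfun] using hcore
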